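/- Let A be a real d×d matrix that is semi-simple (diagonalizable over ℂ) with all eigenvalues purely imaginary. Then there exists a sequence (t_k) of reals increasing to +∞ such that e^{t_k A} converges to the identity matrix. -/

import Mathlib

open Matrix Filter Topology

private lemma recurrence {d : ℕ} (b : Fin d → ℝ) {ε : ℝ} (hε : 0 < ε) (T : ℝ) :
    ∃ t : ℝ, T < t ∧ ∀ i, ‖Complex.exp ((t * b i : ℝ) * Complex.I) - 1‖ < ε := by
  set s : ℝ := max T 0 + 1 with hs
  have hs0 : 0 < s := lt_of_le_of_lt (le_max_right T 0) (lt_add_one _)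
  have hsT : T < s := lt_of_le_of_lt (le_max_left T 0) (lt_add_one _)
  set u : ℕ → (Fin d → ℂ) := fun n i => Complex.exp (((n : ℝ) * s * b i : ℝ) * Complex.I) with hu
  have humem : ∀ n, u n ∈ Metric.closedBall (0 : Fin d → ℂ) 1 := by
    intro n
    rw [Metric.mem_closedBall, dist_zero_right]
    refine (pi_norm_le_iff_of_nonneg zero_le_one).mpr fun i => ?_
    simp only [hu]
    rw [Complex.norm_exp_ofReal_mul_I]
  obtain ⟨x, -, φ, hφ, hconv⟩ := (isCompact_closedBall (0 : Fin d → ℂ) 1).tendsto_subseq humem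
  have hc := hconv.cauchySeq
  rw [Metric.cauchySeq_iff] at hc
  obtain ⟨N, hN⟩ := hc ε hε
  have hlt : φ N < φ (N + 1) := hφ (Nat.lt_succ_self N)
  have hdist : dist (u (φ (N + 1))) (u (φ N)) < ε := hN _ (Nat.le_succ N) _ le_rfl
  set a : ℕ := φ N
  set c : ℕ := φ (N + 1)
  have h1 : (1 : ℝ) ≤ (c : ℝ) - (a : ℝ) := by
    have : a + 1 ≤ c := hlt
    have := (Nat.cast_le (α := ℝ)).mpr this
    push_cast at this
    linarith
  refine ⟨((c : ℝ) - a) * s, ?_, fun i => ?_⟩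
  · calc T < s := hsT
      _ = 1 * s := (one_mul s).symm
      _ ≤ ((c : ℝ) - a) * s := mul_le_mul_of_nonneg_right h1 hs0.le
  have hexp : (((a : ℝ) * s * b i : ℝ) : ℂ) * Complex.I
      + (((((c : ℝ) - a) * s) * b i : ℝ) : ℂ) * Complex.I
      = (((c : ℝ) * s * b i : ℝ) : ℂ) * Complex.I := by
    push_cast
    ring
  have hkey : u c i - u a i
      = Complex.exp (((a : ℝ) * s * b i : ℝ) * Complex.I) *
        (Complex.exp (((((c : ℝ) - a) * s) * b i : ℝ) * Complex.I) - 1) := by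
    simp only [hu]
    rw [mul_sub, mul_one, ← Complex.exp_add, hexp]
  have habs := congrArg norm hkey
  rw [norm_mul, Complex.norm_exp_ofReal_mul_I, one_mul] at habs
  rw [← habs]
  calc ‖u c i - u a i‖ = dist (u c i) (u a i) := by
        rw [Complex.dist_eq]
    _ ≤ dist (u c) (u a) := dist_le_pi_dist (u c) (u a) i
    _ < ε := hdist


private lemma map_exp_complexify {d : ℕ} (M : Matrix (Fin d) (Fin d) ℝ) :
    (NormedSpace.exp M).map (algebraMap ℝ ℂ) = NormedSpace.exp (M.map (algebraMap ℝ ℂ)) := by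
  letI : SeminormedRing (Matrix (Fin d) (Fin d) ℝ) := Matrix.linftyOpSemiNormedRing
  letI : NormedRing (Matrix (Fin d) (Fin d) ℝ) := Matrix.linftyOpNormedRing
  letI : NormedAlgebra ℝ (Matrix (Fin d) (Fin d) ℝ) := Matrix.linftyOpNormedAlgebra
  letI : NormedAlgebra ℚ (Matrix (Fin d) (Fin d) ℝ) := Matrix.linftyOpNormedAlgebra
  letI : SeminormedRing (Matrix (Fin d) (Fin d) ℂ) := Matrix.linftyOpSemiNormedRing
  letI : NormedRing (Matrix (Fin d) (Fin d) ℂ) := Matrix.linftyOpNormedRing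
  letI : NormedAlgebra ℝ (Matrix (Fin d) (Fin d) ℂ) := Matrix.linftyOpNormedAlgebra
  have hcont : Continuous fun X : Matrix (Fin d) (Fin d) ℝ => X.map (algebraMap ℝ ℂ) :=
    continuous_id.matrix_map (continuous_algebraMap ℝ ℂ)
  exact NormedSpace.map_exp
    (((algebraMap ℝ ℂ).mapMatrix : Matrix (Fin d) (Fin d) ℝ →+* Matrix (Fin d) (Fin d) ℂ))
    hcont M

theorem stmt11 {d : ℕ} (A : Matrix (Fin d) (Fin d) ℝ)
    (hdiag : ∃ P : Matrix (Fin d) (Fin d) ℂ, IsUnit P.det ∧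
      ∃ μ : Fin d → ℂ, (∀ i, (μ i).re = 0) ∧
        A.map (algebraMap ℝ ℂ) = P * Matrix.diagonal μ * P⁻¹) :
    ∃ t : ℕ → ℝ, StrictMono t ∧ Tendsto t atTop atTop ∧
      Tendsto (fun k => NormedSpace.exp (t k • A)) atTop
        (𝓝 (1 : Matrix (Fin d) (Fin d) ℝ)) := by
  obtain ⟨P, hPdet, μ, hμre, hA⟩ := hdiag
  have hPunit : IsUnit P := (Matrix.isUnit_iff_isUnit_det P).mpr hPdet
  set b : Fin d → ℝ := fun i => (μ i).im with hb
  have hμ : ∀ i, μ i = (b i : ℂ) * Complex.I := by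
    intro i
    apply Complex.ext <;> simp [hb, hμre i]
  -- build the sequence
  choose f hf1 hf2 using fun (T : ℝ) (k : ℕ) =>
    recurrence b (ε := 1 / (k + 1)) (by positivity) T
  set t : ℕ → ℝ := fun n => Nat.rec (f 0 0) (fun n tn => f (max tn n) (n + 1)) n with ht
  have htsucc : ∀ n, max (t n) n < t (n + 1) := fun n => hf1 (max (t n) n) (n + 1)
  have hmono : StrictMono t :=
    strictMono_nat_of_lt_succ fun n => lt_of_le_of_lt (le_max_left _ _) (htsucc n)
  have hbound : ∀ n i, ‖Complex.exp ((t n * b i : ℝ) * Complex.I) - 1‖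
      < 1 / (n + 1) := by
    intro n i
    cases n with
    | zero => exact hf2 0 0 i
    | succ m => exact hf2 (max (t m) m) (m + 1) i
  have htop : Tendsto t atTop atTop := by
    apply tendsto_atTop_mono' atTop (show (fun n : ℕ => (n : ℝ) - 1) ≤ᶠ[atTop] t from ?_)
      (tendsto_atTop_add_const_right atTop (-1) tendsto_natCast_atTop_atTop)
    · filter_upwards with n
      cases n with
      | zero =>
        have h1 := hf1 0 0
        have h0 : t 0 = f 0 0 := rfl
        simp only [Nat.cast_zero]
        linarith
      | succ m =>
        have h := htsucc m
        have : (m : ℝ) < t (m + 1) := lt_of_le_of_lt (le_max_right _ _) h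
        push_cast
        linarith
  refine ⟨t, hmono, htop, ?_⟩
  -- complexification of the exponential
  have hmap : ∀ s : ℝ, (NormedSpace.exp (s • A)).map (algebraMap ℝ ℂ)
      = P * Matrix.diagonal (fun i => Complex.exp ((s * b i : ℝ) * Complex.I)) * P⁻¹ := by
    intro s
    have hcomm := map_exp_complexify (s • A)
    have hsmul : (s • A).map (algebraMap ℝ ℂ) = s • A.map (algebraMap ℝ ℂ) := by
      ext i j
      simp only [Matrix.map_apply, Matrix.smul_apply, smul_eq_mul, Complex.real_smul,
        Complex.coe_algebraMap]
      push_cast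
      ring
    rw [hcomm, hsmul, hA]
    have hconj : s • (P * Matrix.diagonal μ * P⁻¹)
        = P * Matrix.diagonal (s • μ) * P⁻¹ := by
      rw [Matrix.diagonal_smul]
      rw [Matrix.mul_smul, Matrix.smul_mul]
    rw [hconj, Matrix.exp_conj P _ hPunit, Matrix.exp_diagonal]
    have hvec : NormedSpace.exp (s • μ)
        = fun i => Complex.exp ((s * b i : ℝ) * Complex.I) := by
      funext i
      rw [Pi.coe_exp, ← Complex.exp_eq_exp_ℂ]
      congr 1
      rw [Pi.smul_apply, hμ i, Complex.real_smul]
      push_cast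
      ring
    rw [hvec]
  -- convergence of the diagonal entries
  have hdiagconv : Tendsto (fun k => (fun i => Complex.exp ((t k * b i : ℝ) * Complex.I)))
      atTop (𝓝 (fun _ => (1 : ℂ))) := by
    rw [tendsto_pi_nhds]
    intro i
    rw [tendsto_iff_norm_sub_tendsto_zero]
    apply squeeze_zero (fun n => norm_nonneg _) (fun n => le_of_lt ?_)
      tendsto_one_div_add_atTop_nhds_zero_nat
    simpa using hbound n i
  -- convergence of the complexified exponentials
  have hCconv : Tendsto (fun k => (NormedSpace.exp (t k • A)).map (algebraMap ℝ ℂ))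
      atTop (𝓝 (1 : Matrix (Fin d) (Fin d) ℂ)) := by
    simp only [hmap]
    have hcont : Continuous fun v : Fin d → ℂ => P * Matrix.diagonal v * P⁻¹ :=
      ((continuous_const.matrix_mul continuous_id.matrix_diagonal).matrix_mul continuous_const)
    have := (hcont.tendsto (fun _ => (1 : ℂ))).comp hdiagconv
    simpa [Function.comp_def, Matrix.diagonal_one, Matrix.mul_one, Matrix.mul_nonsing_inv P hPdet] using this
  -- come back to ℝ
  have hRcont : Continuous fun M : Matrix (Fin d) (Fin d) ℂ => M.map Complex.re :=
    continuous_id.matrix_map Complex.continuous_re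
  have := (hRcont.tendsto (1 : Matrix (Fin d) (Fin d) ℂ)).comp hCconv
  have hRe1 : (1 : Matrix (Fin d) (Fin d) ℂ).map Complex.re = 1 := by
    ext i j
    by_cases h : i = j <;> simp [Matrix.map_apply, Matrix.one_apply, h]
  have hReExp : ∀ k, ((NormedSpace.exp (t k • A)).map (algebraMap ℝ ℂ)).map Complex.re
      = NormedSpace.exp (t k • A) := by
    intro k
    ext i j
    simp [Matrix.map_apply]
  rw [hRe1] at this
  simpa only [Function.comp_def, hReExp] using this
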